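/- For all natural numbers a ≥ 1, b, c, the following identity holds in ℤ: ∑_{j=0}^{c} (−1)^j · C(b, j) · C(a+c−j−1, a−1) equals C(a+c−b−1, c) if a ≥ b, and equals (−1)^c · C(b−a, c) if a < b. (Here C(·,·) is the usual binomial coefficient on natural numbers; in the case a ≥ b the top entry a+c−b−1 is computed with truncated natural subtraction, which gives the correct value 1 when a = b and c = 0 and 0 when a = b and c ≥ 1.) -/
import Mathlib

/-- Recurrence in `b` for the alternating sum. -/
lemma chu_step (a b c : ℕ) :
    (∑ j ∈ Finset.range (c + 1 + 1),
        (-1 : ℤ) ^ j * ((b+1).choose j : ℤ) * ((a + (c+1) - j - 1).choose (a - 1) : ℤ)) =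
    (∑ j ∈ Finset.range (c + 1 + 1),
        (-1 : ℤ) ^ j * (b.choose j : ℤ) * ((a + (c+1) - j - 1).choose (a - 1) : ℤ))
    - (∑ j ∈ Finset.range (c + 1),
        (-1 : ℤ) ^ j * (b.choose j : ℤ) * ((a + c - j - 1).choose (a - 1) : ℤ)) := by
  have h : ∀ j ∈ Finset.range (c+1),
      (-1:ℤ)^(j+1) * (((b+1).choose (j+1) : ℕ) : ℤ) * (((a + (c+1) - (j+1) - 1).choose (a-1) : ℕ) : ℤ)
      = ((-1:ℤ)^(j+1) * ((b.choose (j+1) : ℕ) : ℤ) * (((a + (c+1) - (j+1) - 1).choose (a-1) : ℕ) : ℤ)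
        - (-1:ℤ)^j * ((b.choose j : ℕ) : ℤ) * (((a + c - j - 1).choose (a-1) : ℕ) : ℤ)) := by
    intro j hj
    have hidx : a + (c+1) - (j+1) - 1 = a + c - j - 1 := by omega
    rw [hidx, Nat.choose_succ_succ]
    push_cast
    ring
  rw [Finset.sum_range_succ' _ (c+1), Finset.sum_range_succ' _ (c+1),
      Finset.sum_congr rfl h, Finset.sum_sub_distrib]
  simp [Nat.choose_zero_right]
  ring

/-- A variation of the Chu–Vandermonde identity (Problem 4 of the paper):
`∑_{j=0}^{c} (−1)^j C(b,j) C(a+c−j−1, a−1)` equals `C(a+c−b−1, c)` if `a ≥ b`,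
and `(−1)^c C(b−a, c)` if `a < b`. -/
theorem chu_vandermonde_variation (a b c : ℕ) (ha : 1 ≤ a) :
    (∑ j ∈ Finset.range (c + 1),
        (-1 : ℤ) ^ j * (b.choose j : ℤ) * ((a + c - j - 1).choose (a - 1) : ℤ)) =
      if b ≤ a then ((a + c - b - 1).choose c : ℤ)
      else (-1 : ℤ) ^ c * ((b - a).choose c : ℤ) := by
  induction b generalizing c with
  | zero =>
    rw [if_pos (Nat.zero_le a)]
    rw [Finset.sum_eq_single 0]
    · have h1 : a + c - 0 - 1 = a + c - 1 := by omega
      have h2 : (a + c - 1).choose (a - 1) = (a + c - 1).choose c := by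
        have h3 := Nat.choose_symm (show c ≤ a + c - 1 by omega)
        rw [show a + c - 1 - c = a - 1 by omega] at h3
        exact h3
      have h4 : a + c - 0 - 1 = a + c - 1 := by omega
      simp [h1, h2, h4]
    · intro j hj hj0
      have : Nat.choose 0 j = 0 := Nat.choose_eq_zero_of_lt (Nat.pos_of_ne_zero hj0)
      simp [this]
    · intro h
      exact absurd (Finset.mem_range.mpr (by omega)) h
  | succ b ih =>
    match c with
    | 0 =>
      have h0 : a + 0 - 0 - 1 = a - 1 := by omega
      have h0' : a + 0 - (b+1) - 1 = a - b - 2 := by omega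
      rw [Finset.sum_range_one]
      simp only [pow_zero, Nat.choose_zero_right, Nat.cast_one, one_mul, h0,
        Nat.choose_self]
      split <;> simp
    | Nat.succ c =>
      simp only [Nat.succ_eq_add_one]
      rw [chu_step a b c, ih, ih]
      by_cases hba : b + 1 ≤ a
      · have hb : b ≤ a := by omega
        rw [if_pos hb, if_pos hb, if_pos hba]
        have h1 : a + (c+1) - b - 1 = (a + c - b - 1) + 1 := by omega
        have h2 : a + (c+1) - (b+1) - 1 = a + c - b - 1 := by omega
        rw [h1, h2, Nat.choose_succ_succ]
        push_cast
        ring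
      · by_cases hb : b ≤ a
        · have hba' : b = a := by omega
          rw [if_pos hb, if_pos hb, if_neg hba]
          have h1 : a + (c+1) - b - 1 = c := by omega
          have h3 : b + 1 - a = 1 := by omega
          rw [h1, h3, Nat.choose_succ_self]
          match c with
          | 0 =>
            have h4 : a + 0 - b - 1 = 0 := by omega
            simp [h4]
          | Nat.succ c =>
            have h2 : a + (c+1) - b - 1 = c := by omega
            rw [h2, Nat.choose_succ_self c,
              Nat.choose_eq_zero_of_lt (show 1 < c + 1 + 1 by omega)]
            simp
        · rw [if_neg hb, if_neg hb, if_neg hba]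
          have h1 : b + 1 - a = (b - a) + 1 := by omega
          rw [h1, Nat.choose_succ_succ]
          push_cast
          ring
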